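/- Let (E,‖·‖_E) be a normed real vector space, let T ∈ (0,∞), α ∈ [0,1], let θ be a partition of [0,T], and let f : [0,T] → E be a function. Then the piecewise affine linear interpolation [f]_θ satisfies |[f]_θ|_{C^α([0,T],E)} ≤ |f|_{C^α([0,T],E)} (in [0,∞]). -/

import Mathlib

open ENNReal

/-- The Hölder seminorm (exponent `r`) of `f` on `[0,T]`. -/
noncomputable def holderSemiOn {E : Type} [NormedAddCommGroup E]
    (T : ℝ) (r : ℝ) (f : ℝ → E) : ℝ≥0∞ :=
  ⨆ (s : ℝ) (t : ℝ) (_ : s ∈ Set.Icc (0:ℝ) T) (_ : t ∈ Set.Icc (0:ℝ) T)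
    (_ : s ≠ t), (‖f s - f t‖₊ : ℝ≥0∞) / ENNReal.ofReal (|s - t| ^ r)


lemma aux_concave {α : ℝ} (hα0 : 0 ≤ α) (hα1 : α ≤ 1) {a b l m : ℝ}
    (ha : 0 ≤ a) (hb : 0 ≤ b) (hl : 0 ≤ l) (hm : 0 ≤ m) (hlm : l + m = 1) :
    l * a ^ α + m * b ^ α ≤ (l * a + m * b) ^ α := by
  have := (Real.concaveOn_rpow hα0 hα1).2 (Set.mem_Ici.mpr ha) (Set.mem_Ici.mpr hb) hl hm hlm
  simpa [smul_eq_mul] using this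

lemma core_bound {E : Type} [NormedAddCommGroup E] [NormedSpace ℝ E]
    (α : ℝ) (hα : α ∈ Set.Icc (0:ℝ) 1) (C : ℝ) (hC : 0 ≤ C)
    (K : ℕ) (hK : 1 ≤ K) (θ : ℕ → ℝ)
    (hθmono : ∀ j, j < K → θ j < θ (j + 1))
    (f g : ℝ → E)
    (hg : ∀ j, j < K → ∀ s ∈ Set.Icc (θ j) (θ (j + 1)),
        g s = ((θ (j + 1) - s) / (θ (j + 1) - θ j)) • f (θ j)
            + ((s - θ j) / (θ (j + 1) - θ j)) • f (θ (j + 1)))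
    (hf : ∀ s ∈ Set.Icc (θ 0) (θ K), ∀ t ∈ Set.Icc (θ 0) (θ K),
        ‖f s - f t‖ ≤ C * |s - t| ^ α) :
    ∀ s ∈ Set.Icc (θ 0) (θ K), ∀ t ∈ Set.Icc (θ 0) (θ K),
        ‖g s - g t‖ ≤ C * |s - t| ^ α := by
  classical
  obtain ⟨hα0, hα1⟩ := hα
  -- monotonicity of nodes
  have hmono' : ∀ i j, i ≤ j → j ≤ K → θ i ≤ θ j := by
    intro i j hij hjK
    induction j with
    | zero => simp [Nat.le_zero.mp hij]
    | succ n ih =>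
      by_cases h : i = n + 1
      · subst h; exact le_rfl
      · exact le_trans (ih (by omega) (by omega)) (hθmono n (by omega)).le
  have hΔpos : ∀ i, i < K → (0:ℝ) < θ (i+1) - θ i := fun i hi => sub_pos.mpr (hθmono i hi)
  have hnode : ∀ i, i ≤ K → θ i ∈ Set.Icc (θ 0) (θ K) :=
    fun i hi => ⟨hmono' 0 i (Nat.zero_le _) hi, hmono' i K hi le_rfl⟩
  -- g equals f at nodes
  have gnode : ∀ i, i ≤ K → g (θ i) = f (θ i) := by
    intro i hi
    rcases Nat.lt_or_ge i K with h | h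
    · have := hg i h (θ i) ⟨le_rfl, (hθmono i h).le⟩
      rw [this, sub_self, zero_div, zero_smul, add_zero, div_self (hΔpos i h).ne', one_smul]
    · have hiK : i = K := le_antisymm hi h
      subst hiK
      obtain ⟨m, rfl⟩ : ∃ m, i = m + 1 := ⟨i - 1, by omega⟩
      have := hg m (by omega) (θ (m+1)) ⟨(hθmono m (by omega)).le, le_rfl⟩
      rw [this, sub_self, zero_div, zero_smul, zero_add, div_self (hΔpos m (by omega)).ne', one_smul]
  -- interval finding
  have hfind : ∀ s, s ∈ Set.Icc (θ 0) (θ K) → ∃ i, i < K ∧ θ i ≤ s ∧ s ≤ θ (i+1) := by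
    intro s hs
    have hex : ∃ n, s ≤ θ (n+1) := ⟨K - 1, by rw [Nat.sub_add_cancel hK]; exact hs.2⟩
    set n := Nat.find hex with hn
    have hn1 : s ≤ θ (n+1) := Nat.find_spec hex
    have hnK : n < K := by
      have h1 : s ≤ θ ((K-1)+1) := by rw [Nat.sub_add_cancel hK]; exact hs.2
      have h2 := Nat.find_min' hex h1
      omega
    have hlow : θ n ≤ s := by
      rcases Nat.eq_zero_or_pos n with h0 | hpos
      · rw [h0]; exact hs.1
      · have hmin : ¬ s ≤ θ ((n-1)+1) := Nat.find_min hex (by omega)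
        rw [Nat.sub_add_cancel hpos] at hmin
        exact (not_le.mp hmin).le
    exact ⟨n, hnK, hlow, hn1⟩
  -- key interpolation bound
  have key : ∀ i, i < K → ∀ s ∈ Set.Icc (θ i) (θ (i+1)), ∀ t : ℝ,
      (t ≤ θ i ∨ θ (i+1) ≤ t) → ∀ v : E,
      ‖f (θ i) - v‖ ≤ C * |θ i - t| ^ α → ‖f (θ (i+1)) - v‖ ≤ C * |θ (i+1) - t| ^ α →
      ‖g s - v‖ ≤ C * |s - t| ^ α := by
    intro i hi s hs t ht v h1 h2
    have hΔ : (0:ℝ) < θ (i+1) - θ i := hΔpos i hi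
    have hΔne : θ (i+1) - θ i ≠ 0 := hΔ.ne'
    have hgs : g s - v = ((θ (i+1) - s) / (θ (i+1) - θ i)) • (f (θ i) - v)
        + ((s - θ i) / (θ (i+1) - θ i)) • (f (θ (i+1)) - v) := by
      rw [hg i hi s hs]
      match_scalars <;> field_simp <;> ring
    set l := (θ (i+1) - s) / (θ (i+1) - θ i) with hl
    set m := (s - θ i) / (θ (i+1) - θ i) with hm
    have hl0 : 0 ≤ l := div_nonneg (by linarith [hs.2]) hΔ.le
    have hm0 : 0 ≤ m := div_nonneg (by linarith [hs.1]) hΔ.le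
    have hlm : l + m = 1 := by rw [hl, hm]; field_simp; ring
    have hcomb : l * |θ i - t| + m * |θ (i+1) - t| = |s - t| := by
      have hscal : l * (θ i - t) + m * (θ (i+1) - t) = s - t := by
        rw [hl, hm]; field_simp; ring
      rcases ht with ht | ht
      · rw [abs_of_nonneg (by linarith : (0:ℝ) ≤ θ i - t),
            abs_of_nonneg (by linarith : (0:ℝ) ≤ θ (i+1) - t),
            abs_of_nonneg (by linarith [hs.1] : (0:ℝ) ≤ s - t), hscal]
      · rw [abs_of_nonpos (by linarith : θ i - t ≤ 0),
            abs_of_nonpos (by linarith : θ (i+1) - t ≤ 0),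
            abs_of_nonpos (by linarith [hs.2] : s - t ≤ 0)]
        nlinarith [hscal]
    calc ‖g s - v‖ = ‖l • (f (θ i) - v) + m • (f (θ (i+1)) - v)‖ := by rw [hgs]
      _ ≤ l * ‖f (θ i) - v‖ + m * ‖f (θ (i+1)) - v‖ := by
          refine (norm_add_le _ _).trans ?_
          rw [norm_smul, norm_smul, Real.norm_of_nonneg hl0, Real.norm_of_nonneg hm0]
      _ ≤ l * (C * |θ i - t| ^ α) + m * (C * |θ (i+1) - t| ^ α) := by gcongr
      _ = C * (l * |θ i - t| ^ α + m * |θ (i+1) - t| ^ α) := by ring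
      _ ≤ C * (l * |θ i - t| + m * |θ (i+1) - t|) ^ α :=
          mul_le_mul_of_nonneg_left
            (aux_concave hα0 hα1 (abs_nonneg _) (abs_nonneg _) hl0 hm0 hlm) hC
      _ = C * |s - t| ^ α := by rw [hcomb]
  -- node vs arbitrary point bound
  have claimB : ∀ i, i ≤ K → ∀ t ∈ Set.Icc (θ 0) (θ K),
      ‖g t - f (θ i)‖ ≤ C * |t - θ i| ^ α := by
    intro i hiK t ht
    obtain ⟨j, hjK, hj1, hj2⟩ := hfind t ht
    have hside : θ i ≤ θ j ∨ θ (j+1) ≤ θ i := by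
      rcases le_or_gt i j with h | h
      · exact Or.inl (hmono' i j h (by omega))
      · exact Or.inr (hmono' (j+1) i h hiK)
    exact key j hjK t ⟨hj1, hj2⟩ (θ i) hside (f (θ i))
      (hf _ (hnode j (by omega)) _ (hnode i hiK))
      (hf _ (hnode (j+1) (by omega)) _ (hnode i hiK))
  -- main claim
  intro s hs t ht
  obtain ⟨i, hiK, hi1, hi2⟩ := hfind s hs
  by_cases hside : t ≤ θ i ∨ θ (i+1) ≤ t
  · have b1 : ‖f (θ i) - g t‖ ≤ C * |θ i - t| ^ α := by
      rw [norm_sub_rev, abs_sub_comm]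
      exact claimB i (by omega) t ht
    have b2 : ‖f (θ (i+1)) - g t‖ ≤ C * |θ (i+1) - t| ^ α := by
      rw [norm_sub_rev, abs_sub_comm]
      exact claimB (i+1) (by omega) t ht
    exact key i hiK s ⟨hi1, hi2⟩ t hside (g t) b1 b2
  · push_neg at hside
    obtain ⟨ht1, ht2⟩ := hside
    have hΔ : (0:ℝ) < θ (i+1) - θ i := hΔpos i hiK
    have hdiff : g s - g t = ((t - s)/(θ (i+1) - θ i)) • (f (θ i) - f (θ (i+1))) := by
      rw [hg i hiK s ⟨hi1, hi2⟩, hg i hiK t ⟨ht1.le, ht2.le⟩]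
      match_scalars <;> ring
    by_cases hst : s = t
    · subst hst
      rw [sub_self, norm_zero]
      positivity
    · have habs : |θ i - θ (i+1)| = θ (i+1) - θ i := by
        rw [abs_sub_comm, abs_of_pos hΔ]
      have hfn : ‖f (θ i) - f (θ (i+1))‖ ≤ C * (θ (i+1) - θ i) ^ α := by
        rw [← habs]
        exact hf _ (hnode i (by omega)) _ (hnode (i+1) (by omega))
      have hle : |s - t| ≤ θ (i+1) - θ i :=
        abs_le.mpr ⟨by linarith, by linarith⟩
      have hrpos : (0:ℝ) < |s - t| / (θ (i+1) - θ i) := by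
        apply div_pos _ hΔ
        exact abs_pos.mpr (sub_ne_zero.mpr hst)
      have hr1 : |s - t| / (θ (i+1) - θ i) ≤ 1 := (div_le_one hΔ).mpr hle
      have hrle : |s - t| / (θ (i+1) - θ i) ≤ (|s - t| / (θ (i+1) - θ i)) ^ α := by
        nth_rewrite 1 [← Real.rpow_one (|s - t| / (θ (i+1) - θ i))]
        exact Real.rpow_le_rpow_of_exponent_ge hrpos hr1 hα1
      calc ‖g s - g t‖ = |s - t| / (θ (i+1) - θ i) * ‖f (θ i) - f (θ (i+1))‖ := by
            rw [hdiff, norm_smul, Real.norm_eq_abs, abs_div, abs_of_pos hΔ, abs_sub_comm t s]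
        _ ≤ |s - t| / (θ (i+1) - θ i) * (C * (θ (i+1) - θ i) ^ α) := by
            apply mul_le_mul_of_nonneg_left hfn (by positivity)
        _ = C * (|s - t| / (θ (i+1) - θ i) * (θ (i+1) - θ i) ^ α) := by ring
        _ ≤ C * ((|s - t| / (θ (i+1) - θ i)) ^ α * (θ (i+1) - θ i) ^ α) := by
            apply mul_le_mul_of_nonneg_left _ hC
            exact mul_le_mul_of_nonneg_right hrle (Real.rpow_nonneg hΔ.le α)
        _ = C * |s - t| ^ α := by
            rw [← Real.mul_rpow (by positivity) hΔ.le, div_mul_cancel₀ _ hΔ.ne']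


/-- **Lemma 2.5**: the piecewise affine linear interpolation `g = [f]_θ` of a
function `f` at the nodes of a partition `θ` of `[0,T]` has Hölder seminorm at
most that of `f`. -/
theorem lem_est_hoelder_semi_norm
    {E : Type} [NormedAddCommGroup E] [NormedSpace ℝ E]
    (T : ℝ) (hT : 0 < T) (α : ℝ) (hα : α ∈ Set.Icc (0:ℝ) 1)
    (K : ℕ) (hK : 1 ≤ K) (θ : ℕ → ℝ)
    (hθ0 : θ 0 = 0) (hθK : θ K = T)
    (hθmono : ∀ j, j < K → θ j < θ (j + 1))
    (f g : ℝ → E)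
    (hg : ∀ j, j < K → ∀ s ∈ Set.Icc (θ j) (θ (j + 1)),
        g s = ((θ (j + 1) - s) / (θ (j + 1) - θ j)) • f (θ j)
            + ((s - θ j) / (θ (j + 1) - θ j)) • f (θ (j + 1))) :
    holderSemiOn T α g ≤ holderSemiOn T α f := by
  set H := holderSemiOn T α f with hH
  by_cases hHtop : H = ⊤
  · rw [hHtop]; exact le_top
  set C := H.toReal with hCdef
  have hC : 0 ≤ C := ENNReal.toReal_nonneg
  have hf_real : ∀ s ∈ Set.Icc (0:ℝ) T, ∀ t ∈ Set.Icc (0:ℝ) T,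
      ‖f s - f t‖ ≤ C * |s - t| ^ α := by
    intro s hs t ht
    by_cases hst : s = t
    · subst hst
      rw [sub_self, norm_zero]
      positivity
    · have hterm : (‖f s - f t‖₊ : ℝ≥0∞) / ENNReal.ofReal (|s - t| ^ α) ≤ H := by
        rw [hH, holderSemiOn]
        exact le_iSup_of_le s (le_iSup_of_le t (le_iSup_of_le hs
          (le_iSup_of_le ht (le_iSup_of_le hst le_rfl))))
      have hpos : (0:ℝ) < |s - t| ^ α :=
        Real.rpow_pos_of_pos (abs_pos.mpr (sub_ne_zero.mpr hst)) α
      have hne0 : ENNReal.ofReal (|s - t| ^ α) ≠ 0 := (ENNReal.ofReal_pos.mpr hpos).ne'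
      rw [ENNReal.div_le_iff_le_mul (Or.inl hne0) (Or.inl ENNReal.ofReal_ne_top)] at hterm
      have hfin : H * ENNReal.ofReal (|s - t| ^ α) ≠ ⊤ :=
        ENNReal.mul_ne_top hHtop ENNReal.ofReal_ne_top
      have := ENNReal.toReal_mono hfin hterm
      rwa [ENNReal.toReal_mul, ENNReal.coe_toReal, coe_nnnorm,
        ENNReal.toReal_ofReal hpos.le] at this
  have hg_real : ∀ s ∈ Set.Icc (0:ℝ) T, ∀ t ∈ Set.Icc (0:ℝ) T,
      ‖g s - g t‖ ≤ C * |s - t| ^ α := by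
    have := core_bound α hα C hC K hK θ hθmono f g hg
    rw [hθ0, hθK] at this
    exact this hf_real
  rw [holderSemiOn]
  refine iSup_le fun s => iSup_le fun t => iSup_le fun hs => iSup_le fun ht =>
    iSup_le fun hst => ?_
  have hpos : (0:ℝ) < |s - t| ^ α :=
    Real.rpow_pos_of_pos (abs_pos.mpr (sub_ne_zero.mpr hst)) α
  have hne0 : ENNReal.ofReal (|s - t| ^ α) ≠ 0 := (ENNReal.ofReal_pos.mpr hpos).ne'
  rw [ENNReal.div_le_iff_le_mul (Or.inl hne0) (Or.inl ENNReal.ofReal_ne_top)]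
  calc (‖g s - g t‖₊ : ℝ≥0∞) = ENNReal.ofReal ‖g s - g t‖ :=
        (ofReal_norm_eq_enorm _).symm
    _ ≤ ENNReal.ofReal (C * |s - t| ^ α) :=
        ENNReal.ofReal_le_ofReal (hg_real s hs t ht)
    _ = ENNReal.ofReal C * ENNReal.ofReal (|s - t| ^ α) := ENNReal.ofReal_mul hC
    _ = H * ENNReal.ofReal (|s - t| ^ α) := by rw [hCdef, ENNReal.ofReal_toReal hHtop]
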